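/- Player A's equilibrium expected utility in a single battle with homogeneous success function equals Δ_A · φ(Δ_A/Δ_B); that is, p(x_A*, x_B*)·Δ_A − x_A* = Δ_A·[γ(Δ_A/Δ_B) − (Δ_A/Δ_B)γ'(Δ_A/Δ_B)]. -/

import Mathlib

lemma deriv_sym (γ : ℝ → ℝ)
    (hd : ∀ x, 0 < x → DifferentiableAt ℝ γ x)
    (hsym : ∀ x, 0 < x → γ x + γ (1/x) = 1) :
    ∀ x, 0 < x → deriv γ (1/x) = x^2 * deriv γ x := by
  intro x hx
  have hinv : HasDerivAt (fun y : ℝ => 1/y) (-(x^2)⁻¹) x := by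
    simpa [one_div] using hasDerivAt_inv hx.ne'
  have h2 : HasDerivAt (fun y => γ (1/y)) (deriv γ (1/x) * (-(x^2)⁻¹)) x :=
    ((hd (1/x) (by positivity)).hasDerivAt).comp x hinv
  have hf : HasDerivAt (fun y => γ y + γ (1/y))
      (deriv γ x + deriv γ (1/x) * (-(x^2)⁻¹)) x :=
    ((hd x hx).hasDerivAt).add h2
  have heq : (fun y => γ y + γ (1/y)) =ᶠ[nhds x] fun _ => (1:ℝ) := by
    filter_upwards [IsOpen.mem_nhds isOpen_Ioi hx] with y hy using hsym y hy
  have hf0 : HasDerivAt (fun y => γ y + γ (1/y)) 0 x :=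
    (hasDerivAt_const x (1:ℝ)).congr_of_eventuallyEq heq
  have := hf.unique hf0
  have hx2 : (x:ℝ)^2 ≠ 0 := by positivity
  field_simp at this ⊢
  linarith

theorem stmt_3 (γ : ℝ → ℝ)
    (hγ0 : γ 0 = 0)
    (hγtop : Filter.Tendsto γ Filter.atTop (nhds 1))
    (hrange : ∀ x, 0 ≤ x → γ x ∈ Set.Icc (0:ℝ) 1)
    (hd : ∀ x, 0 < x → DifferentiableAt ℝ γ x)
    (hd2 : ∀ x, 0 < x → DifferentiableAt ℝ (deriv γ) x)
    (hpos : ∀ x, 0 < x → 0 < deriv γ x)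
    (hconc : ∀ x, 0 < x → deriv (deriv γ) x ≤ 0)
    (hsym : ∀ x, 0 < x → γ x + γ (1/x) = 1)
    (ΔA ΔB xA xB : ℝ) (hA : 0 < ΔA) (hB : 0 < ΔB)
    (hxA : xA = ΔB * deriv γ (ΔB / ΔA))
    (hxB : xB = ΔA * deriv γ (ΔA / ΔB)) :
    γ (xA / xB) * ΔA - xA =
      ΔA * (γ (ΔA / ΔB) - (ΔA / ΔB) * deriv γ (ΔA / ΔB)) := by
  set t := ΔA / ΔB with ht
  have htpos : 0 < t := div_pos hA hB
  have hBA : ΔB / ΔA = 1 / t := by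
    field_simp [ht]
    have := hB.ne'; rw [ht]; field_simp
  have hder : deriv γ (ΔB / ΔA) = t^2 * deriv γ t := by
    rw [hBA]; exact deriv_sym γ hd hsym t htpos
  have hgt : 0 < deriv γ t := hpos t htpos
  have hxA' : xA = ΔA * t * deriv γ t := by
    rw [hxA, hder, ht]; field_simp
  have hxB' : xB = ΔA * deriv γ t := by rw [hxB]
  have hxBne : xB ≠ 0 := by rw [hxB']; positivity
  have hratio : xA / xB = t := by
    rw [hxA', hxB']
    field_simp
  rw [hratio, hxA']
  ring
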